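/- Let p be an odd prime and t ∈ F_p, t ≠ 0, 1. The map sending (x,y) to (U,V) with U = 2(x^2-1)y + 2x^2 - (2-t) and V = 2Ux gives a bijection between the affine F_p-points of the curve D_t: (x^2-1)(y^2-1) = t and the set E_t(F_p) \ {O, R, 2R, 3R}, where E_t: V^2 = U^3 - 2(t-2)U^2 + t^2 U and R = (t,2t). -/

import Mathlib

theorem correspondence_bijection (p : ℕ) [Fact p.Prime] (hodd : p % 2 = 1)
    (t : ZMod p) (ht0 : t ≠ 0) (ht1 : t ≠ 1) :
    Set.BijOn
      (fun P : ZMod p × ZMod p =>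
        ((2 * (P.1 ^ 2 - 1) * P.2 + 2 * P.1 ^ 2 - (2 - t)),
          2 * (2 * (P.1 ^ 2 - 1) * P.2 + 2 * P.1 ^ 2 - (2 - t)) * P.1))
      {P : ZMod p × ZMod p | (P.1 ^ 2 - 1) * (P.2 ^ 2 - 1) = t}
      ({Q : ZMod p × ZMod p |
          Q.2 ^ 2 = Q.1 ^ 3 - 2 * (t - 2) * Q.1 ^ 2 + t ^ 2 * Q.1} \
        {(t, 2 * t), (0, 0), (t, -(2 * t))}) := by
  have hp2 : (2 : ZMod p) ≠ 0 := by
    intro h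
    have h2 : p ∣ 2 := by
      have := (CharP.cast_eq_zero_iff (ZMod p) p 2).mp (by exact_mod_cast h)
      exact this
    have hp := (Fact.out : p.Prime)
    have : p = 2 := (Nat.prime_dvd_prime_iff_eq hp Nat.prime_two).mp h2
    rw [this] at hodd
    norm_num at hodd
  set g : ZMod p × ZMod p → ZMod p × ZMod p := fun Q =>
    (Q.2 / (2 * Q.1),
      (Q.1 - 2 * ((Q.2 / (2 * Q.1)) ^ 2 - 1) - t) / (2 * ((Q.2 / (2 * Q.1)) ^ 2 - 1)))
    with hg
  -- facts about domain points
  have dom : ∀ x y : ZMod p, (x ^ 2 - 1) * (y ^ 2 - 1) = t →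
      x ^ 2 - 1 ≠ 0 ∧ (2 * (x ^ 2 - 1) * y + 2 * x ^ 2 - (2 - t)) ≠ 0 ∧
        (2 * (x ^ 2 - 1) * y + 2 * x ^ 2 - (2 - t)) ≠ t := by
    intro x y hP
    have hA : x ^ 2 - 1 ≠ 0 := fun hA => ht0 (by linear_combination -hP + (y ^ 2 - 1) * hA)
    have hy : y + 1 ≠ 0 := fun hy => ht0 (by linear_combination -hP + (x ^ 2 - 1) * (y - 1) * hy)
    have hUeq : 2 * (x ^ 2 - 1) * y + 2 * x ^ 2 - (2 - t) = (x ^ 2 - 1) * (y + 1) ^ 2 := by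
      linear_combination -hP
    refine ⟨hA, ?_, ?_⟩
    · rw [hUeq]; exact mul_ne_zero hA (pow_ne_zero 2 hy)
    · intro h
      have h2 : (2 : ZMod p) * (x ^ 2 - 1) * (y + 1) = 0 := by linear_combination h
      rcases mul_eq_zero.mp h2 with h' | h'
      · rcases mul_eq_zero.mp h' with h'' | h''
        · exact hp2 h''
        · exact hA h''
      · exact hy h'
  -- facts about codomain points
  have cod : ∀ U V : ZMod p, V ^ 2 = U ^ 3 - 2 * (t - 2) * U ^ 2 + t ^ 2 * U →
      (U, V) ≠ (t, 2 * t) → (U, V) ≠ ((0 : ZMod p), (0 : ZMod p)) → (U, V) ≠ (t, -(2 * t)) →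
      U ≠ 0 ∧ (V / (2 * U)) ^ 2 - 1 ≠ 0 := by
    intro U V hQ hne1 hne2 hne3
    have hU0 : U ≠ 0 := by
      intro h
      apply hne2
      have hV : V ^ 2 = 0 := by
        linear_combination hQ + (U ^ 2 - 2 * (t - 2) * U + t ^ 2) * h
      have hV0 : V = 0 := by
        exact pow_eq_zero_iff (two_ne_zero) |>.mp hV
      rw [Prod.mk.injEq]; exact ⟨h, hV0⟩
    refine ⟨hU0, ?_⟩
    intro h
    have h4 : V ^ 2 = 4 * U ^ 2 := by
      have h2 : V ^ 2 = (2 * U) ^ 2 := by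
        field_simp at h
        linear_combination h
      linear_combination h2
    have hUt : (U - t) ^ 2 * U = 0 := by linear_combination -hQ + h4
    have hUteq : U = t := by
      rcases mul_eq_zero.mp hUt with h' | h'
      · have := pow_eq_zero_iff (two_ne_zero) |>.mp h'
        linear_combination this
      · exact absurd h' hU0
    have hVfac : (V - 2 * t) * (V + 2 * t) = 0 := by
      linear_combination h4 + 4 * (U + t) * hUteq
    rcases mul_eq_zero.mp hVfac with h' | h'
    · exact hne1 (by rw [Prod.mk.injEq]; exact ⟨hUteq, by linear_combination h'⟩)
    · exact hne3 (by rw [Prod.mk.injEq]; exact ⟨hUteq, by linear_combination h'⟩)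
  refine Set.InvOn.bijOn (f' := g) ?_ ?_ ?_
  · constructor
    · -- left inverse
      rintro ⟨x, y⟩ hP
      simp only [Set.mem_setOf_eq] at hP
      obtain ⟨hA, hU0, hUt⟩ := dom x y hP
      rw [hg]
      dsimp only
      have hx : 2 * (2 * (x ^ 2 - 1) * y + 2 * x ^ 2 - (2 - t)) * x /
          (2 * (2 * (x ^ 2 - 1) * y + 2 * x ^ 2 - (2 - t))) = x := by
        exact mul_div_cancel_left₀ x (mul_ne_zero hp2 hU0)
      rw [Prod.mk.injEq]
      constructor
      · exact hx
      · rw [hx]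
        field_simp
        ring
    · -- right inverse
      rintro ⟨U, V⟩ hQmem
      obtain ⟨hQ, hne⟩ := hQmem
      simp only [Set.mem_setOf_eq] at hQ
      simp only [Set.mem_insert_iff, Set.mem_singleton_iff, not_or] at hne
      obtain ⟨hne1, hne2, hne3⟩ := hne
      obtain ⟨hU0, hA⟩ := cod U V hQ hne1 hne2 hne3
      rw [hg]
      dsimp only
      rw [Prod.mk.injEq]
      set x := V / (2 * U) with hxdef
      have hxV : 2 * U * x = V := by rw [hxdef]; field_simp
      have hfst : 2 * (x ^ 2 - 1) *
            ((U - 2 * (x ^ 2 - 1) - t) / (2 * (x ^ 2 - 1))) +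
            2 * x ^ 2 - (2 - t) = U := by
        field_simp
        ring
      constructor
      · exact hfst
      · rw [hfst]
        exact hxV
  · -- maps to
    rintro ⟨x, y⟩ hP
    simp only [Set.mem_setOf_eq] at hP
    obtain ⟨hA, hU0, hUt⟩ := dom x y hP
    constructor
    · simp only [Set.mem_setOf_eq]
      linear_combination (-4 * (2 * (x ^ 2 - 1) * y + 2 * x ^ 2 - (2 - t)) * (x ^ 2 - 1)) * hP
    · simp only [Set.mem_insert_iff, Set.mem_singleton_iff, not_or]
      refine ⟨?_, ?_, ?_⟩
      · intro h; rw [Prod.mk.injEq] at h; exact hUt h.1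
      · intro h; rw [Prod.mk.injEq] at h; exact hU0 h.1
      · intro h; rw [Prod.mk.injEq] at h; exact hUt h.1
  · -- g maps to
    rintro ⟨U, V⟩ hQmem
    obtain ⟨hQ, hne⟩ := hQmem
    simp only [Set.mem_setOf_eq] at hQ
    simp only [Set.mem_insert_iff, Set.mem_singleton_iff, not_or] at hne
    obtain ⟨hne1, hne2, hne3⟩ := hne
    obtain ⟨hU0, hA⟩ := cod U V hQ hne1 hne2 hne3
    rw [hg]
    simp only [Set.mem_setOf_eq]
    set x := V / (2 * U) with hxdef
    have hxV : 2 * U * x = V := by rw [hxdef]; field_simp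
    have hQ' : (2 * U * x) ^ 2 = U ^ 3 - 2 * (t - 2) * U ^ 2 + t ^ 2 * U := by
      rw [hxV]; exact hQ
    have hkey : (U - t) ^ 2 - 4 * U * (x ^ 2 - 1) = 0 := by
      have h0 : U * ((U - t) ^ 2 - 4 * U * (x ^ 2 - 1)) = 0 := by linear_combination -hQ'
      rcases mul_eq_zero.mp h0 with h' | h'
      · exact absurd h' hU0
      · exact h'
    clear_value x
    field_simp
    linear_combination hkey
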